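/- With L = |W|, for every subset W̄ ⊆ W it holds that rank(T_{W̄, X}) = rank(F(W̄, X)) + |W̄| − L, where T_{W̄, X} is the submatrix of T = (I − G)⁻¹ · X̄ with rows indexed by W̄ and all columns, and F(W̄, X) = [ (G − I) restricted to the columns indexed by W ∖ W̄ , X̄ ]. -/

import Mathlib

open Matrix

lemma range_mulVecLin_fromColumns {F : Type*} [Field F] {m n₁ n₂ : Type*}
    [Fintype m] [Fintype n₁] [Fintype n₂]
    (P : Matrix m n₁ F) (Q : Matrix m n₂ F) :
    LinearMap.range (Matrix.fromCols P Q).mulVecLin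
      = LinearMap.range P.mulVecLin ⊔ LinearMap.range Q.mulVecLin := by
  apply le_antisymm
  · rintro _ ⟨v, rfl⟩
    rw [Matrix.mulVecLin_apply, ← Sum.elim_comp_inl_inr v, Matrix.fromCols_mulVec_sumElim]
    exact Submodule.add_mem_sup (LinearMap.mem_range_self _ _) (LinearMap.mem_range_self _ _)
  · rw [sup_le_iff]
    constructor
    · rintro _ ⟨v, rfl⟩
      exact ⟨Sum.elim v 0, by simp [Matrix.mulVecLin_apply, Matrix.fromCols_mulVec_sumElim]⟩
    · rintro _ ⟨v, rfl⟩
      exact ⟨Sum.elim 0 v, by simp [Matrix.mulVecLin_apply, Matrix.fromCols_mulVec_sumElim]⟩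

lemma rank_fromColumns_of_disjoint {F : Type*} [Field F] {m n₁ n₂ : Type*}
    [Fintype m] [Fintype n₁] [Fintype n₂]
    (P : Matrix m n₁ F) (Q : Matrix m n₂ F)
    (h : Disjoint (LinearMap.range P.mulVecLin) (LinearMap.range Q.mulVecLin)) :
    (Matrix.fromCols P Q).rank = P.rank + Q.rank := by
  rw [Matrix.rank, range_mulVecLin_fromColumns, Matrix.rank, Matrix.rank]
  have h2 := Submodule.finrank_sup_add_finrank_inf_eq (LinearMap.range P.mulVecLin)
    (LinearMap.range Q.mulVecLin)
  rw [h.eq_bot] at h2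
  simpa using h2

lemma sum_subtype_ite {F : Type*} [Field F] {W : Type*} [Fintype W] [DecidableEq W]
    {s : Finset W} (g : ↥s → F) (i : W) :
    (∑ j : ↥s, (if i = (j : W) then (1 : F) else 0) * g j)
      = if h : i ∈ s then g ⟨i, h⟩ else 0 := by
  by_cases h : i ∈ s
  · rw [dif_pos h, Fintype.sum_eq_single (⟨i, h⟩ : ↥s)]
    · simp
    · intro j hj
      rw [if_neg, zero_mul]
      intro hij
      exact hj (Subtype.ext hij.symm)
  · rw [dif_neg h]
    apply Finset.sum_eq_zero
    intro j _
    rw [if_neg, zero_mul]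
    rintro rfl
    exact h j.2

lemma subE_mul_apply {F : Type*} [Field F] {W X : Type*} [Fintype W] [DecidableEq W]
    [Fintype X] (s : Finset W) (M : Matrix ↥s X F) (i : W) (x : X) :
    ((1 : Matrix W W F).submatrix id (fun j : ↥s => (j : W)) * M) i x
      = if h : i ∈ s then M ⟨i, h⟩ x else 0 := by
  rw [Matrix.mul_apply]
  rw [show (∑ j : ↥s, (1 : Matrix W W F).submatrix id (fun j : ↥s => (j : W)) i j * M j x)
      = ∑ j : ↥s, (if i = (j : W) then (1 : F) else 0) * M j x from
    Finset.sum_congr rfl (by intro j _; simp [Matrix.one_apply])]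
  exact sum_subtype_ite _ i

lemma subE_mulVec {F : Type*} [Field F] {W : Type*} [Fintype W] [DecidableEq W]
    (s : Finset W) (v : ↥s → F) (i : W) :
    (((1 : Matrix W W F).submatrix id (fun j : ↥s => (j : W))) *ᵥ v) i
      = if h : i ∈ s then v ⟨i, h⟩ else 0 := by
  rw [Matrix.mulVec, dotProduct]
  rw [show (∑ j : ↥s, (1 : Matrix W W F).submatrix id (fun j : ↥s => (j : W)) i j * v j)
      = ∑ j : ↥s, (if i = (j : W) then (1 : F) else 0) * v j from
    Finset.sum_congr rfl (by intro j _; simp [Matrix.one_apply])]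
  exact sum_subtype_ite _ i

theorem stmt1 {F : Type*} [Field F] {W X : Type*} [Fintype W] [Fintype X]
    [DecidableEq W] [DecidableEq X]
    (G : Matrix W W F) (Xb : Matrix W X F)
    (hG : IsUnit (1 - G))
    (Wb : Finset W) :
    ((((1 - G)⁻¹ * Xb).submatrix (fun i : ↥Wb => (i : W)) id).rank : ℤ)
      = ((Matrix.fromCols
            ((G - 1).submatrix id (fun j : ↥(Wbᶜ) => (j : W))) Xb).rank : ℤ)
        + (Wb.card : ℤ) - (Fintype.card W : ℤ) := by
  classical
  have hdet : IsUnit ((1 : Matrix W W F) - G).det :=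
    (Matrix.isUnit_iff_isUnit_det _).mp hG
  set A : Matrix W W F := 1 - G with hA
  set T : Matrix W X F := A⁻¹ * Xb with hT
  set c : ↥(Wbᶜ) → W := fun j => (j : W) with hc
  set bb : ↥Wb → W := fun i => (i : W) with hbb
  set E : Matrix W ↥(Wbᶜ) F := (1 : Matrix W W F).submatrix id c with hE
  set E' : Matrix W ↥Wb F := (1 : Matrix W W F).submatrix id bb with hE'
  set T₂ : Matrix ↥Wb X F := T.submatrix bb id with hT₂
  set T₁ : Matrix ↥(Wbᶜ) X F := T.submatrix c id with hT₁
  set Mf : Matrix W (↥(Wbᶜ) ⊕ X) F :=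
    Matrix.fromCols ((G - 1).submatrix id c) Xb with hMf
  -- Step 1: multiply on the left by A⁻¹
  have hdet' : IsUnit (A⁻¹).det := A.isUnit_nonsing_inv_det hdet
  have step1 : (A⁻¹ * Mf).rank = Mf.rank :=
    Matrix.rank_mul_eq_right_of_isUnit_det _ _ hdet'
  have hAinvMf : A⁻¹ * Mf = Matrix.fromCols (-E) T := by
    rw [hMf, Matrix.mul_fromCols]
    have h1 : A⁻¹ * ((G - 1).submatrix id c) = (A⁻¹ * (G - 1)).submatrix id c := by
      ext i j
      simp [Matrix.mul_apply]
    have h2 : A⁻¹ * (G - 1) = -1 := by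
      have h3 : G - 1 = -A := by rw [hA, neg_sub]
      rw [h3, Matrix.mul_neg, Matrix.nonsing_inv_mul _ hdet]
    rw [h1, h2, hE]
    rfl
  -- Step 2: multiply on the right by the unit fromBlocks (-1) T₁ 0 1
  set U : Matrix (↥(Wbᶜ) ⊕ X) (↥(Wbᶜ) ⊕ X) F :=
    Matrix.fromBlocks (-1) T₁ 0 1 with hU
  have hUdet : IsUnit U.det := by
    rw [hU, Matrix.det_fromBlocks_zero₂₁, Matrix.det_one, mul_one, Matrix.det_neg,
      Matrix.det_one, mul_one]
    exact (IsUnit.neg isUnit_one).pow _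
  have step2 : (Matrix.fromCols (-E) T * U).rank = (Matrix.fromCols (-E) T).rank :=
    Matrix.rank_mul_eq_left_of_isUnit_det _ _ hUdet
  have hprod : Matrix.fromCols (-E) T * U
      = Matrix.fromCols E (T - E * T₁) := by
    rw [hU, Matrix.fromCols_mul_fromBlocks]
    simp only [Matrix.mul_zero, Matrix.mul_one, Matrix.mul_neg, Matrix.neg_mul, neg_neg,
      add_zero, neg_add_eq_sub]
  -- identify T - E * T₁ with E' * T₂
  have hT' : T - E * T₁ = E' * T₂ := by
    ext i x
    have hLc : (E * T₁) i x = if h : i ∈ Wbᶜ then T i x else 0 := by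
      rw [hE, hc, subE_mul_apply Wbᶜ T₁ i x]
      split <;> rfl
    have hRc : (E' * T₂) i x = if h : i ∈ Wb then T i x else 0 := by
      rw [hE', hbb, subE_mul_apply Wb T₂ i x]
      split <;> rfl
    rw [Matrix.sub_apply, hLc, hRc]
    by_cases h : i ∈ Wb
    · rw [dif_pos h, dif_neg (by simp [h]), sub_zero]
    · rw [dif_neg h, dif_pos (by simp [h]), sub_self]
  -- rank of E
  have hErank : E.rank = Wbᶜ.card := by
    have hinj : Function.Injective E.mulVecLin := by
      intro v w hvw
      funext j
      have h1 := congrFun hvw (j : W)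
      rw [Matrix.mulVecLin_apply, Matrix.mulVecLin_apply, hE, hc, subE_mulVec, subE_mulVec] at h1
      rwa [dif_pos j.2, dif_pos j.2] at h1
    rw [Matrix.rank, LinearMap.finrank_range_of_inj hinj,
      Module.finrank_fintype_fun_eq_card, Fintype.card_coe]
  -- rank of E' * T₂
  have hE'T₂ : Matrix.transpose E' * (E' * T₂) = T₂ := by
    ext j x
    rw [Matrix.mul_apply]
    have : ∀ i : W, (Matrix.transpose E') j i * (E' * T₂) i x
        = (if i = (j : W) then (1 : F) else 0) * (E' * T₂) i x := by
      intro i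
      rw [Matrix.transpose_apply, hE']
      simp [Matrix.one_apply, hbb]
    rw [Finset.sum_congr rfl fun i _ => this i]
    have h4 : (∑ i : W, (if i = (j : W) then (1 : F) else 0) * (E' * T₂) i x)
        = (E' * T₂) (j : W) x := by
      simp
    rw [h4, hE', hbb, subE_mul_apply Wb T₂, dif_pos j.2]
  have hT₂rank : (E' * T₂).rank = T₂.rank := by
    refine le_antisymm (Matrix.rank_mul_le_right _ _) ?_
    calc T₂.rank = (Matrix.transpose E' * (E' * T₂)).rank := by rw [hE'T₂]
      _ ≤ (E' * T₂).rank := Matrix.rank_mul_le_right _ _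
  -- disjointness of the two column spaces
  have hdisj : Disjoint (LinearMap.range E.mulVecLin)
      (LinearMap.range (E' * T₂).mulVecLin) := by
    rw [Submodule.disjoint_def]
    intro f hf hg
    obtain ⟨v, hv⟩ := hf
    obtain ⟨w, hw⟩ := hg
    funext i
    by_cases h : i ∈ Wb
    · rw [← hv, Matrix.mulVecLin_apply, hE, hc, subE_mulVec,
        dif_neg (by simp [Finset.mem_compl, h])]
      rfl
    · rw [← hw, Matrix.mulVecLin_apply, ← Matrix.mulVec_mulVec, hE', hbb, subE_mulVec,
        dif_neg h]
      rfl
  have hMfrank : Mf.rank = Wbᶜ.card + T₂.rank := by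
    rw [← step1, hAinvMf, ← step2, hprod, hT',
      rank_fromColumns_of_disjoint _ _ hdisj, hErank, hT₂rank]
  have hcard : Wb.card + Wbᶜ.card = Fintype.card W := Finset.card_add_card_compl Wb
  have hle : Wb.card ≤ Fintype.card W := Finset.card_le_univ Wb
  omega
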